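/- arXiv:1309.1914 — 2 statements merged into one kernel-verified Lean document; each statement's English description precedes it below -/
import Mathlib

section
/- Let λ₁,…,λ_s be complex numbers of modulus 1. Define the group of multiplicative relations L = { v ∈ ℤ^s : λ₁^{v₁}⋯λ_s^{v_s} = 1 } and the subgroup T = { μ ∈ 𝕋^s : μ₁^{v₁}⋯μ_s^{v_s} = 1 for all v ∈ L } of the torus 𝕋^s = {z ∈ ℂ : |z|=1}^s. Then the orbit S = { (λ₁ⁿ,…,λ_sⁿ) : n ∈ ℕ } is a dense subset of T. -/
open Complex MeasureTheory

noncomputable section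
namespace OrbitDenseAux

variable {s : ℕ}

/-- character on the torus -/
def chi (w : Fin s → ℤ) (z : Fin s → Circle) : Circle := ∏ i, z i ^ w i

lemma chi_mul (w : Fin s → ℤ) (x y : Fin s → Circle) :
    chi w (x * y) = chi w x * chi w y := by
  simp [chi, Pi.mul_apply, mul_zpow, Finset.prod_mul_distrib]

lemma chi_inv (w : Fin s → ℤ) (x : Fin s → Circle) : chi w x⁻¹ = (chi w x)⁻¹ := by
  simp [chi, inv_zpow]

lemma chi_one (w : Fin s → ℤ) : chi w (1 : Fin s → Circle) = 1 := by
  simp [chi]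

lemma continuous_chi (w : Fin s → ℤ) : Continuous (chi (s := s) w) := by
  apply continuous_finset_prod
  intro i _
  exact (continuous_apply i).zpow _

lemma coe_zpow (z : Circle) (n : ℤ) : ((z ^ n : Circle) : ℂ) = (z : ℂ) ^ n := by
  have hp : ∀ m : ℕ, ((z ^ m : Circle) : ℂ) = (z : ℂ) ^ m := by
    intro m
    induction m with
    | zero => simp
    | succ m ih => rw [pow_succ, pow_succ, Circle.coe_mul, ih]
  cases n with
  | ofNat k => simpa using hp k
  | negSucc k => simp [zpow_negSucc, hp]

lemma zpow_fsum {Γ ι : Type*} [CommGroup Γ] (x : Γ) (f : ι → ℤ) (t : Finset ι) :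
    x ^ (∑ j ∈ t, f j) = ∏ j ∈ t, x ^ f j := by
  induction t using Finset.cons_induction with
  | empty => simp
  | cons a u ha ih => simp [Finset.sum_cons, Finset.prod_cons, zpow_add, ih]

def cc : Fin 3 → ℝ := ![1, 2⁻¹, 2⁻¹]
def ee : Fin 3 → ℤ := ![0, 1, -1]

def wt {s k : ℕ} (t : Fin s × Fin k → Fin 3) : Fin s → ℤ := fun i => ∑ j, ee (t (i, j))

lemma factor_expand (u : Circle) :
    1 + (((u : ℂ) + (u : ℂ)⁻¹) / 2) = ∑ a, (cc a : ℂ) * (u : ℂ) ^ (ee a) := by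
  simp [Fin.sum_univ_three, cc, ee]
  ring

/-- the Fejér-type kernel centered at η -/
def fr (η : Fin s → Circle) (z : Fin s → Circle) : ℝ :=
  ∏ i, (1 + (((z i) * (η i)⁻¹ : Circle) : ℂ).re)

lemma fr_nonneg (η z : Fin s → Circle) : 0 ≤ fr η z := by
  apply Finset.prod_nonneg
  intro i _
  have h := abs_re_le_norm ((z i * (η i)⁻¹ : Circle) : ℂ)
  rw [Circle.norm_coe] at h
  have := abs_le.mp h
  linarith [this.1]

lemma fr_le_two_pow (η z : Fin s → Circle) : fr η z ≤ 2 ^ s := by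
  calc fr η z ≤ ∏ _i : Fin s, (2:ℝ) := by
        apply Finset.prod_le_prod
        · intro i _
          have h := abs_re_le_norm ((z i * (η i)⁻¹ : Circle) : ℂ)
          rw [Circle.norm_coe] at h
          have := abs_le.mp h
          linarith [this.1]
        · intro i _
          have h := abs_re_le_norm ((z i * (η i)⁻¹ : Circle) : ℂ)
          rw [Circle.norm_coe] at h
          have := abs_le.mp h
          linarith [this.2]
    _ = 2 ^ s := by simp

lemma continuous_fr (η : Fin s → Circle) : Continuous (fr η) := by
  apply continuous_finset_prod
  intro i _
  exact continuous_const.add (Complex.continuous_re.comp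
    (continuous_subtype_val.comp ((continuous_apply i).mul continuous_const)))

lemma fr_complex (η z : Fin s → Circle) :
    ((fr η z : ℝ) : ℂ) = ∏ i, ∑ a, (cc a : ℂ) * (((z i) * (η i)⁻¹ : Circle) : ℂ) ^ (ee a) := by
  rw [fr, Complex.ofReal_prod]
  apply Finset.prod_congr rfl
  intro i _
  rw [Complex.ofReal_add, Complex.ofReal_one, ← factor_expand]
  congr 1
  set u : Circle := z i * (η i)⁻¹
  have h1 : ((u : ℂ)) + (u : ℂ)⁻¹ = 2 * ((u : ℂ).re : ℂ) := by
    rw [← Circle.coe_inv, Circle.coe_inv_eq_conj, Complex.add_conj]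
    push_cast
    ring
  rw [h1]
  push_cast
  ring

/-- full expansion of the k-th power of the kernel into characters -/
lemma fr_pow_expand (η z : Fin s → Circle) (k : ℕ) :
    ((fr η z : ℝ) : ℂ) ^ k
      = ∑ t ∈ Fintype.piFinset (fun _ : Fin s × Fin k => (Finset.univ : Finset (Fin 3))),
          (((∏ p, cc (t p) : ℝ) : ℂ) * ((chi (wt t) η : ℂ))⁻¹) * (chi (wt t) z : ℂ) := by
  rw [fr_complex]
  have h1 : (∏ i, ∑ a, (cc a : ℂ) * (((z i) * (η i)⁻¹ : Circle) : ℂ) ^ (ee a)) ^ k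
      = ∏ p : Fin s × Fin k, ∑ a, (cc a : ℂ) * (((z p.1) * (η p.1)⁻¹ : Circle) : ℂ) ^ (ee a) := by
    rw [Fintype.prod_prod_type]
    rw [← Finset.prod_pow]
    apply Finset.prod_congr rfl
    intro i _
    simp [Finset.prod_const]
  rw [h1, Finset.prod_univ_sum]
  apply Finset.sum_congr rfl
  intro t _
  rw [Finset.prod_mul_distrib]
  have h2 : (∏ p : Fin s × Fin k, (cc (t p) : ℂ)) = ((∏ p, cc (t p) : ℝ) : ℂ) := by push_cast; rfl
  have h3 : (∏ p : Fin s × Fin k, (((z p.1) * (η p.1)⁻¹ : Circle) : ℂ) ^ (ee (t p)))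
      = (chi (wt t) z : ℂ) * ((chi (wt t) η : ℂ))⁻¹ := by
    have : ∀ p : Fin s × Fin k, (((z p.1) * (η p.1)⁻¹ : Circle) : ℂ) ^ (ee (t p))
        = (((z p.1 * (η p.1)⁻¹) ^ (ee (t p)) : Circle) : ℂ) := fun p => (coe_zpow _ _).symm
    simp_rw [this]
    have h6 : ∀ g : Fin s × Fin k → Circle,
        (∏ p, ((g p : ℂ))) = ((∏ p, g p : Circle) : ℂ) :=
      fun g => (map_prod Circle.coeHom g Finset.univ).symm
    rw [h6]
    have h4 : (∏ p : Fin s × Fin k, (z p.1 * (η p.1)⁻¹) ^ (ee (t p)))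
        = chi (wt t) (z * η⁻¹) := by
      rw [Fintype.prod_prod_type]
      apply Finset.prod_congr rfl
      intro i _
      show ∏ y : Fin k, (z i * (η i)⁻¹) ^ ee (t (i, y))
          = (z i * (η i)⁻¹) ^ (∑ j : Fin k, ee (t (i, j)))
      rw [zpow_fsum]
    rw [h4, chi_mul, chi_inv]
    push_cast
    rfl
  rw [h2, h3]
  ring


lemma integral_char_eq_zero {Γ : Type*} [Group Γ] [TopologicalSpace Γ] [IsTopologicalGroup Γ]
    [MeasurableSpace Γ] [BorelSpace Γ]
    (ν : Measure Γ) [ν.IsMulLeftInvariant]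
    (φ : Γ → ℂ) (hmul : ∀ x y, φ (x * y) = φ x * φ y)
    (g : Γ) (hg : φ g ≠ 1) : ∫ x, φ x ∂ν = 0 := by
  have h1 : ∫ x, φ (g * x) ∂ν = ∫ x, φ x ∂ν := integral_mul_left_eq_self φ g
  simp_rw [hmul, integral_const_mul] at h1
  have h2 := sub_eq_zero.mpr h1
  rw [← sub_one_mul] at h2
  rcases mul_eq_zero.mp h2 with h | h
  · exact absurd (sub_eq_zero.mp h) hg
  · exact h

lemma mem_closure_of_annihilates (l μ : Fin s → Circle)
    (hann : ∀ w : Fin s → ℤ, chi w l = 1 → chi w μ = 1) :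
    μ ∈ (Subgroup.zpowers l).topologicalClosure := by
  by_contra hμH
  set H : Subgroup (Fin s → Circle) := (Subgroup.zpowers l).topologicalClosure with hHdef
  have hHclosed : IsClosed (H : Set (Fin s → Circle)) := Subgroup.isClosed_topologicalClosure _
  haveI : CompactSpace H := isCompact_iff_compactSpace.mp (hHclosed.isCompact)
  letI : MeasurableSpace H := borel H
  haveI : BorelSpace H := ⟨rfl⟩
  set ν : Measure H := Measure.haarMeasure ⊤ with hν
  have hlH : l ∈ H := Subgroup.le_topologicalClosure _ (Subgroup.mem_zpowers l)
  set I : (Fin s → ℤ) → ℂ := fun w => ∫ x : H, (chi w (x : Fin s → Circle) : ℂ) ∂ν with hI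
  have hIzero : ∀ w, chi w l ≠ 1 → I w = 0 := by
    intro w hw
    refine integral_char_eq_zero ν (fun x : H => (chi w (x : Fin s → Circle) : ℂ)) ?_ ⟨l, hlH⟩ ?_
    · intro x y
      simp only [Subgroup.coe_mul, chi_mul, Circle.coe_mul]
    · simpa [Circle.coe_eq_one] using hw
  have hterm : ∀ w : Fin s → ℤ, ((chi w μ : ℂ))⁻¹ * I w = I w := by
    intro w
    by_cases hw : chi w l = 1
    · rw [hann w hw]
      simp
    · rw [hIzero w hw]
      simp
  -- integrability of continuous functions on H
  have integR : ∀ (η : Fin s → Circle) (k : ℕ),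
      Integrable (fun x : H => (fr η (x : Fin s → Circle)) ^ k) ν := by
    intro η k
    exact (((continuous_fr η).comp continuous_subtype_val).pow k).integrable_of_hasCompactSupport
      (HasCompactSupport.of_compactSpace _)
  have integC : ∀ (w : Fin s → ℤ) (C : ℂ),
      Integrable (fun x : H => C * (chi w (x : Fin s → Circle) : ℂ)) ν := by
    intro w C
    exact (continuous_const.mul
      (continuous_subtype_val.comp ((continuous_chi w).comp continuous_subtype_val))).integrable_of_hasCompactSupport
      (HasCompactSupport.of_compactSpace _)
  -- key identity
  have hexp : ∀ (η : Fin s → Circle), (∀ w : Fin s → ℤ, chi w η = 1 → True) → ∀ k : ℕ,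
      (∀ w : Fin s → ℤ, ((chi w η : ℂ))⁻¹ * I w = I w) →
      ((∫ x : H, (fr η (x : Fin s → Circle)) ^ k ∂ν : ℝ) : ℂ)
        = ∑ t ∈ Fintype.piFinset (fun _ : Fin s × Fin k => (Finset.univ : Finset (Fin 3))),
            ((∏ p, cc (t p) : ℝ) : ℂ) * I (wt t) := by
    intro η _ k hη
    have h1 : ((∫ x : H, (fr η (x : Fin s → Circle)) ^ k ∂ν : ℝ) : ℂ)
        = ∫ x : H, ((fr η (x : Fin s → Circle) : ℝ) : ℂ) ^ k ∂ν := by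
      have : ∫ x : H, (((fr η (x : Fin s → Circle)) ^ k : ℝ) : ℂ) ∂ν
          = (((∫ x : H, (fr η (x : Fin s → Circle)) ^ k ∂ν : ℝ)) : ℂ) := integral_ofReal
      rw [← this]
      congr 1
      funext x
      push_cast
      ring
    rw [h1]
    have h2 : ∀ x : H, ((fr η (x : Fin s → Circle) : ℝ) : ℂ) ^ k
        = ∑ t ∈ Fintype.piFinset (fun _ : Fin s × Fin k => (Finset.univ : Finset (Fin 3))),
            (((∏ p, cc (t p) : ℝ) : ℂ) * ((chi (wt t) η : ℂ))⁻¹) * (chi (wt t) (x : Fin s → Circle) : ℂ) :=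
      fun x => fr_pow_expand η (x : Fin s → Circle) k
    rw [integral_congr_ae (Filter.Eventually.of_forall h2)]
    rw [integral_finset_sum _ (fun t _ => by
      simpa [mul_assoc] using integC (wt t) ((((∏ p, cc (t p) : ℝ) : ℂ)) * ((chi (wt t) η : ℂ))⁻¹))]
    apply Finset.sum_congr rfl
    intro t _
    rw [show (fun x : H => (((∏ p, cc (t p) : ℝ) : ℂ) * ((chi (wt t) η : ℂ))⁻¹)
          * (chi (wt t) (x : Fin s → Circle) : ℂ))
        = fun x : H => (((∏ p, cc (t p) : ℝ) : ℂ) * ((chi (wt t) η : ℂ))⁻¹)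
          * (chi (wt t) (x : Fin s → Circle) : ℂ) from rfl]
    rw [integral_const_mul, mul_assoc, hη (wt t)]
  have hreal : ∀ k : ℕ,
      ∫ x : H, (fr μ (x : Fin s → Circle)) ^ k ∂ν
        = ∫ x : H, (fr 1 (x : Fin s → Circle)) ^ k ∂ν := by
    intro k
    have hμ' := hexp μ (fun _ _ => trivial) k hterm
    have h1' := hexp 1 (fun _ _ => trivial) k (by
      intro w
      rw [chi_one]
      simp)
    exact_mod_cast hμ'.trans h1'.symm
  -- maximizer of fr μ on H
  obtain ⟨z₀, hz₀H, hz₀max'⟩ :=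
    hHclosed.isCompact.exists_isMaxOn (s := (H : Set (Fin s → Circle)))
      ⟨1, H.one_mem⟩ (continuous_fr μ).continuousOn
  have hz₀max : ∀ y ∈ (H : Set (Fin s → Circle)), fr μ y ≤ fr μ z₀ := fun y hy => hz₀max' hy
  set M : ℝ := fr μ z₀ with hM
  have hM0 : 0 ≤ M := fr_nonneg μ z₀
  have factor_mem : ∀ (u : Circle), 0 ≤ 1 + (u : ℂ).re ∧ 1 + (u : ℂ).re ≤ 2 := by
    intro u
    have h := abs_re_le_norm (u : ℂ)
    rw [Circle.norm_coe] at h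
    have h2 := abs_le.mp h
    constructor <;> linarith [h2.1, h2.2]
  have hMlt : M < 2 ^ s := by
    have hne : z₀ ≠ μ := fun h => hμH (h ▸ hz₀H)
    obtain ⟨i₀, hi₀⟩ : ∃ i, z₀ i ≠ μ i := by
      by_contra h
      push_neg at h
      exact hne (funext h)
    have hu1 : (z₀ i₀ * (μ i₀)⁻¹ : Circle) ≠ 1 := by
      intro h
      apply hi₀
      have := mul_inv_eq_one.mp h
      exact this
    have hfaclt : 1 + ((z₀ i₀ * (μ i₀)⁻¹ : Circle) : ℂ).re < 2 := by
      set u : Circle := z₀ i₀ * (μ i₀)⁻¹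
      have hre1 : (u : ℂ).re ≤ 1 := by
        have h := abs_re_le_norm (u : ℂ)
        rw [Circle.norm_coe] at h
        linarith [(abs_le.mp h).2]
      have hre : (u : ℂ).re < 1 := by
        rcases lt_or_eq_of_le hre1 with h | h
        · exact h
        · exfalso
          apply hu1
          have hns : Complex.normSq (u : ℂ) = 1 := Circle.normSq_coe u
          rw [Complex.normSq_apply, h] at hns
          have him : (u : ℂ).im = 0 := by nlinarith
          apply Circle.ext
          rw [Circle.coe_one]
          exact Complex.ext (by rw [h]; rfl) (by rw [him]; rfl)
      linarith
    have hs1 : 1 ≤ s := i₀.pos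
    -- product bound
    have hsplit : fr μ z₀ = (1 + ((z₀ i₀ * (μ i₀)⁻¹ : Circle) : ℂ).re)
        * ∏ i ∈ Finset.univ.erase i₀, (1 + ((z₀ i * (μ i)⁻¹ : Circle) : ℂ).re) := by
      rw [fr, ← Finset.mul_prod_erase Finset.univ _ (Finset.mem_univ i₀)]
    have hP0 : 0 ≤ ∏ i ∈ Finset.univ.erase i₀, (1 + ((z₀ i * (μ i)⁻¹ : Circle) : ℂ).re) :=
      Finset.prod_nonneg fun i _ => (factor_mem _).1
    have hPle : ∏ i ∈ Finset.univ.erase i₀, (1 + ((z₀ i * (μ i)⁻¹ : Circle) : ℂ).re)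
        ≤ 2 ^ (s - 1) := by
      calc ∏ i ∈ Finset.univ.erase i₀, (1 + ((z₀ i * (μ i)⁻¹ : Circle) : ℂ).re)
          ≤ ∏ _i ∈ Finset.univ.erase i₀, (2:ℝ) :=
            Finset.prod_le_prod (fun i _ => (factor_mem _).1) (fun i _ => (factor_mem _).2)
        _ = 2 ^ (s - 1) := by
            rw [Finset.prod_const, Finset.card_erase_of_mem (Finset.mem_univ i₀)]
            simp
    have h2pos : (0:ℝ) < 2 ^ (s - 1) := by positivity
    calc M = (1 + ((z₀ i₀ * (μ i₀)⁻¹ : Circle) : ℂ).re)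
        * ∏ i ∈ Finset.univ.erase i₀, (1 + ((z₀ i * (μ i)⁻¹ : Circle) : ℂ).re) := hsplit
      _ ≤ (1 + ((z₀ i₀ * (μ i₀)⁻¹ : Circle) : ℂ).re) * 2 ^ (s - 1) :=
          mul_le_mul_of_nonneg_left hPle (factor_mem _).1
      _ < 2 * 2 ^ (s - 1) := mul_lt_mul_of_pos_right hfaclt h2pos
      _ = 2 ^ s := by
          rw [← pow_succ']
          congr 1
          omega
  -- choose ε
  obtain ⟨ε, hε0, hε1, hεM⟩ : ∃ ε : ℝ, 0 < ε ∧ ε < 1 ∧ M < (2 - ε) ^ s := by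
    have hcont : ContinuousAt (fun x : ℝ => (2 - x) ^ s) 0 := by fun_prop
    have hev : ∀ᶠ x : ℝ in nhds 0, M < (2 - x) ^ s := by
      apply hcont
      have h20 : (fun x : ℝ => (2 - x) ^ s) 0 = 2 ^ s := by norm_num
      rw [h20]
      exact Ioi_mem_nhds hMlt
    obtain ⟨δ, hδ0, hδ⟩ := Metric.eventually_nhds_iff.mp hev
    refine ⟨min (δ / 2) 2⁻¹, lt_min (by linarith) (by norm_num), ?_, ?_⟩
    · exact lt_of_le_of_lt (min_le_right _ _) (by norm_num)
    · apply hδ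
      rw [Real.dist_eq, sub_zero, abs_of_pos (lt_min (by linarith) (by norm_num))]
      calc min (δ / 2) 2⁻¹ ≤ δ / 2 := min_le_left _ _
        _ < δ := by linarith
  set D : ℝ := (2 - ε) ^ s with hD
  have h2ε : (0:ℝ) < 2 - ε := by linarith
  have hD0 : (0:ℝ) < D := pow_pos h2ε s
  set W : Set H := {x : H | ∀ i, 1 - ε < (((x : Fin s → Circle)) i : ℂ).re} with hWdef
  have hWopen : IsOpen W := by
    have hWeq : W = ⋂ i, (fun x : H => (((x : Fin s → Circle) i : ℂ)).re) ⁻¹' Set.Ioi (1 - ε) := by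
      ext x
      simp [hWdef, Set.mem_iInter]
    rw [hWeq]
    exact isOpen_iInter_of_finite fun i =>
      (Complex.continuous_re.comp (continuous_subtype_val.comp
        ((continuous_apply i).comp continuous_subtype_val))).isOpen_preimage _ isOpen_Ioi
  have hW1 : (1 : H) ∈ W := by
    intro i
    have h1c : (((1 : H) : Fin s → Circle) i : ℂ) = 1 := by
      rw [OneMemClass.coe_one, Pi.one_apply, Circle.coe_one]
    rw [h1c]
    simp only [Complex.one_re]
    linarith
  have hWpos : 0 < ν W := hWopen.measure_pos ν ⟨1, hW1⟩
  have hWne : ν W ≠ ⊤ := measure_ne_top ν W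
  set ρ : ℝ := (ν W).toReal with hρ
  have hρ0 : 0 < ρ := ENNReal.toReal_pos hWpos.ne' hWne
  set V : ℝ := (ν Set.univ).toReal with hV
  have hfrW : ∀ x : H, x ∈ W → D ≤ fr 1 (x : Fin s → Circle) := by
    intro x hx
    have hfac : ∀ i : Fin s,
        2 - ε ≤ 1 + ((((x : Fin s → Circle) i) * ((1 : Fin s → Circle) i)⁻¹ : Circle) : ℂ).re := by
      intro i
      have : ((x : Fin s → Circle) i) * ((1 : Fin s → Circle) i)⁻¹ = (x : Fin s → Circle) i := by
        simp
      rw [this]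
      have := hx i
      linarith
    calc D = ∏ _i : Fin s, (2 - ε) := by rw [Finset.prod_const]; simp [hD]
      _ ≤ fr 1 (x : Fin s → Circle) :=
        Finset.prod_le_prod (fun i _ => le_of_lt h2ε) (fun i _ => hfac i)
  have hchain : ∀ k : ℕ, D ^ k * ρ ≤ M ^ k * V := by
    intro k
    have h1 : D ^ k * ρ ≤ ∫ x in W, fr 1 (x : Fin s → Circle) ^ k ∂ν := by
      apply setIntegral_ge_of_const_le_real hWopen.measurableSet hWne
      · intro x hx
        exact pow_le_pow_left₀ hD0.le (hfrW x hx) k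
      · exact (integR 1 k).integrableOn
    have h2 : ∫ x in W, fr 1 (x : Fin s → Circle) ^ k ∂ν ≤ ∫ x : H, fr 1 (x : Fin s → Circle) ^ k ∂ν :=
      setIntegral_le_integral (integR 1 k)
        (Filter.Eventually.of_forall fun x => pow_nonneg (fr_nonneg _ _) k)
    have h3 : ∫ x : H, fr μ (x : Fin s → Circle) ^ k ∂ν ≤ M ^ k * V := by
      have hb : ∀ x : H, ‖fr μ (x : Fin s → Circle) ^ k‖ ≤ M ^ k := by
        intro x
        rw [Real.norm_eq_abs, _root_.abs_of_nonneg (pow_nonneg (fr_nonneg _ _) k)]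
        exact pow_le_pow_left₀ (fr_nonneg _ _) (hz₀max _ x.2) k
      calc ∫ x : H, fr μ (x : Fin s → Circle) ^ k ∂ν
          ≤ ‖∫ x : H, fr μ (x : Fin s → Circle) ^ k ∂ν‖ := le_abs_self _
        _ ≤ M ^ k * V := norm_integral_le_of_norm_le_const (Filter.Eventually.of_forall hb)
    have hre := hreal k
    linarith
  have hMD : M / D < 1 := (div_lt_one hD0).mpr hεM
  have htend : Filter.Tendsto (fun k : ℕ => (M / D) ^ k * V) Filter.atTop (nhds 0) := by
    have ht := tendsto_pow_atTop_nhds_zero_of_lt_one (div_nonneg hM0 hD0.le) hMD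
    simpa using ht.mul_const V
  obtain ⟨k, hk⟩ := (htend.eventually (eventually_lt_nhds hρ0)).exists
  have hc := hchain k
  have hDk0 : (0:ℝ) < D ^ k := pow_pos hD0 k
  rw [div_pow] at hk
  have hk2 : M ^ k * V < ρ * D ^ k := by
    have heq : M ^ k * V = (M ^ k / D ^ k * V) * D ^ k := by field_simp
    rw [heq]
    exact mul_lt_mul_of_pos_right hk hDk0
  nlinarith


lemma chi_coe (w : Fin s → ℤ) (z : Fin s → Circle) :
    ((chi w z : Circle) : ℂ) = ∏ i, (z i : ℂ) ^ (w i) := by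
  have h := map_prod Circle.coeHom (fun i => z i ^ w i) Finset.univ
  have h2 : ((chi w z : Circle) : ℂ) = ∏ i, ((z i ^ w i : Circle) : ℂ) := h
  rw [h2]
  exact Finset.prod_congr rfl fun i _ => coe_zpow _ _

lemma pow_zpow_comm {Γ : Type*} [CommGroup Γ] (x : Γ) (n : ℕ) (v : ℤ) :
    (x ^ n) ^ v = (x ^ v) ^ n := by
  rw [← zpow_natCast x n, ← zpow_mul, mul_comm, zpow_mul, zpow_natCast]

end OrbitDenseAux

open OrbitDenseAux in
theorem orbit_dense_in_relation_torus (s : ℕ) (lam : Fin s → ℂ)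
    (hlam : ∀ i, ‖lam i‖ = 1) :
    closure {z : Fin s → ℂ | ∃ n : ℕ, z = fun i => lam i ^ n} =
      {μ : Fin s → ℂ | (∀ i, ‖μ i‖ = 1) ∧
        ∀ v : Fin s → ℤ, (∏ i, lam i ^ v i) = 1 → (∏ i, μ i ^ v i) = 1} := by
  set l : Fin s → Circle := fun i => ⟨lam i, mem_sphere_zero_iff_norm.mpr (hlam i)⟩ with hl
  have hlcoe : ∀ i, (l i : ℂ) = lam i := fun i => rfl
  ext μ
  constructor
  · -- closure of orbit ⊆ relation torus
    intro hμ
    obtain ⟨f, hfS, hftend⟩ := mem_closure_iff_seq_limit.mp hμ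
    have hcoord : ∀ i, Filter.Tendsto (fun j => f j i) Filter.atTop (nhds (μ i)) :=
      fun i => ((continuous_apply i).continuousAt).tendsto.comp hftend
    have hnorm : ∀ i, ‖μ i‖ = 1 := by
      intro i
      have h1 : Filter.Tendsto (fun j => ‖f j i‖) Filter.atTop (nhds ‖μ i‖) :=
        (continuous_norm.continuousAt).tendsto.comp (hcoord i)
      have h2 : ∀ j, ‖f j i‖ = 1 := by
        intro j
        obtain ⟨n, hn⟩ := hfS j
        rw [hn]
        simp [norm_pow, hlam i]
      rw [show (fun j => ‖f j i‖) = fun _ => (1:ℝ) from funext h2] at h1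
      exact tendsto_nhds_unique h1 tendsto_const_nhds
    refine ⟨hnorm, ?_⟩
    intro v hv
    have hμ0 : ∀ i, μ i ≠ 0 := by
      intro i h
      have hni := hnorm i
      rw [h] at hni
      simpa using hni
    -- the product of the circle relations is 1 along the orbit
    have hlv : (∏ i, l i ^ v i : Circle) = 1 := by
      apply Circle.coe_injective
      show ((chi v l : Circle) : ℂ) = ((1 : Circle) : ℂ)
      rw [chi_coe, Circle.coe_one, show (fun i => (l i : ℂ) ^ v i) = fun i => lam i ^ v i
        from funext fun i => by rw [hlcoe], hv]
    have hval : ∀ j, (∏ i, f j i ^ v i) = 1 := by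
      intro j
      obtain ⟨n, hn⟩ := hfS j
      rw [hn]
      have : ∀ i, (lam i ^ n) ^ (v i) = (((l i ^ v i) ^ n : Circle) : ℂ) := by
        intro i
        rw [← pow_zpow_comm, ← hlcoe i]
        rw [show ((l i : ℂ)) ^ n = ((l i ^ n : Circle) : ℂ) by norm_cast]
        rw [coe_zpow]
      simp only [this]
      have h3 := map_prod Circle.coeHom (fun i => (l i ^ v i) ^ n) Finset.univ
      have h4 : (∏ i, (((l i ^ v i) ^ n : Circle) : ℂ)) = ((∏ i, (l i ^ v i) ^ n : Circle) : ℂ) :=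
        h3.symm
      rw [h4, Finset.prod_pow, hlv, one_pow, Circle.coe_one]
    have htendv : Filter.Tendsto (fun j => ∏ i, f j i ^ v i) Filter.atTop
        (nhds (∏ i, μ i ^ v i)) := by
      apply tendsto_finset_prod
      intro i _
      exact (continuousAt_zpow₀ (μ i) (v i) (Or.inl (hμ0 i))).tendsto.comp (hcoord i)
    rw [show (fun j => ∏ i, f j i ^ v i) = fun _ => (1:ℂ) from funext hval] at htendv
    exact tendsto_nhds_unique htendv tendsto_const_nhds
  · -- relation torus ⊆ closure of orbit
    rintro ⟨hnorm, hrel⟩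
    set μ' : Fin s → Circle := fun i => ⟨μ i, mem_sphere_zero_iff_norm.mpr (hnorm i)⟩ with hμ'
    have hμcoe : ∀ i, (μ' i : ℂ) = μ i := fun i => rfl
    have hann : ∀ w : Fin s → ℤ, chi w l = 1 → chi w μ' = 1 := by
      intro w hw
      have hco : ((chi w l : Circle) : ℂ) = 1 := by rw [hw, Circle.coe_one]
      rw [chi_coe] at hco
      have hco2 : (∏ i, lam i ^ w i) = 1 := by
        rw [show (fun i => lam i ^ w i) = fun i => (l i : ℂ) ^ w i from
          funext fun i => by rw [hlcoe]]
        exact hco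
      have hmu := hrel w hco2
      apply Circle.coe_injective
      rw [chi_coe, Circle.coe_one]
      rw [show (fun i => (μ' i : ℂ) ^ w i) = fun i => μ i ^ w i from
        funext fun i => by rw [hμcoe]]
      exact hmu
    have hmem := mem_closure_of_annihilates l μ' hann
    have hmem2 : μ' ∈ closure (Set.range ((l ^ ·) : ℕ → (Fin s → Circle))) := by
      have h1 : μ' ∈ closure ((Subgroup.zpowers l : Subgroup (Fin s → Circle)) :
          Set (Fin s → Circle)) := by
        rw [← Subgroup.topologicalClosure_coe]
        exact hmem
      rw [Subgroup.coe_zpowers] at h1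
      rwa [closure_range_zpow_eq_pow] at h1
    set emb : (Fin s → Circle) → (Fin s → ℂ) := fun z i => (z i : ℂ) with hemb
    have hembc : Continuous emb :=
      continuous_pi fun i => continuous_subtype_val.comp (continuous_apply i)
    have hμemb : μ = emb μ' := by
      funext i
      rfl
    have hsub : emb '' Set.range ((l ^ ·) : ℕ → (Fin s → Circle))
        ⊆ {z : Fin s → ℂ | ∃ n : ℕ, z = fun i => lam i ^ n} := by
      rintro z ⟨y, ⟨n, hy⟩, hz⟩
      refine ⟨n, ?_⟩
      rw [← hz, ← hy]
      funext i
      show ((((l ^ n) : Fin s → Circle) i : Circle) : ℂ) = lam i ^ n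
      rw [Pi.pow_apply, ← hlcoe i]
      norm_cast
    rw [hμemb]
    have h5 : emb μ' ∈ closure (emb '' Set.range ((l ^ ·) : ℕ → (Fin s → Circle))) :=
      image_closure_subset_closure_image hembc (Set.mem_image_of_mem emb hmem2)
    exact closure_mono hsub h5
end
end

section
/- Let θ₁,…,θ_s and ψ₁,…,ψ_s be real numbers such that for all integers u₁,…,u_s, if u₁θ₁+…+u_sθ_s ∈ ℤ then u₁ψ₁+…+u_sψ_s ∈ ℤ. Then for every ε > 0 there exist integers p₁,…,p_s and a natural number n such that |nθ_i − p_i − ψ_i| ≤ ε for all i = 1,…,s. -/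
open Submodule Module Filter Topology

section KroneckerAux

variable {E : Type*} [NormedAddCommGroup E] [NormedSpace ℝ E] [FiniteDimensional ℝ E]

def lineSub (H : AddSubgroup E) : Submodule ℝ E where
  carrier := {x | ∀ t : ℝ, t • x ∈ H}
  add_mem' := fun ha hb t => by simpa [smul_add] using H.add_mem (ha t) (hb t)
  zero_mem' := fun t => by simpa using H.zero_mem
  smul_mem' := fun c x hx t => by simpa [smul_smul] using hx (t * c)

omit [FiniteDimensional ℝ E] in
lemma lineSub_le (H : AddSubgroup E) {x : E} (hx : x ∈ lineSub H) : x ∈ H := by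
  simpa using hx 1

lemma exists_line (H : AddSubgroup E) (hH : IsClosed (H : Set E)) (W : Submodule ℝ E)
    (h : ∀ ε : ℝ, 0 < ε → ∃ x : E, x ∈ H ∧ x ∈ W ∧ x ≠ 0 ∧ ‖x‖ < ε) :
    ∃ u : E, ‖u‖ = 1 ∧ u ∈ W ∧ ∀ t : ℝ, t • u ∈ H := by
  choose x hxH hxW hx0 hxe using fun k : ℕ => h (1/(k+1)) (by positivity)
  have hn0 : ∀ k, ‖x k‖ ≠ 0 := fun k => norm_ne_zero_iff.mpr (hx0 k)
  set u : ℕ → E := fun k => ‖x k‖⁻¹ • x k with hu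
  have husph : ∀ k, u k ∈ Metric.sphere (0:E) 1 := by
    intro k
    simp only [Metric.mem_sphere, dist_zero_right, hu, norm_smul, norm_inv, norm_norm]
    exact inv_mul_cancel₀ (hn0 k)
  obtain ⟨z, hz, φ, hφmono, hφtend⟩ := (isCompact_sphere (0:E) 1).tendsto_subseq husph
  have hz1 : ‖z‖ = 1 := by simpa [dist_zero_right] using hz
  have hrtend : Tendsto (fun k => ‖x (φ k)‖) atTop (𝓝 0) := by
    have hb : ∀ k, ‖x (φ k)‖ ≤ 1/(k+1) := by
      intro k
      refine le_trans (hxe (φ k)).le ?_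
      have : (k:ℝ) + 1 ≤ (φ k : ℝ) + 1 := by
        have : k ≤ φ k := hφmono.le_apply
        have := Nat.cast_le (α := ℝ) |>.mpr this
        linarith
      rw [div_le_div_iff₀ (by positivity) (by positivity)]; linarith
    refine squeeze_zero (fun k => norm_nonneg _) hb ?_
    simpa using tendsto_one_div_add_atTop_nhds_zero_nat (𝕜 := ℝ)
  refine ⟨z, hz1, ?_, ?_⟩
  · exact (Submodule.closed_of_finiteDimensional W).mem_of_tendsto hφtend
      (Eventually.of_forall fun k => W.smul_mem _ (hxW _))
  · intro t
    have key : Tendsto (fun k => (⌊t / ‖x (φ k)‖⌋ : ℤ) • x (φ k)) atTop (𝓝 (t • z)) := by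
      have heq : ∀ k, (⌊t / ‖x (φ k)‖⌋ : ℤ) • x (φ k)
          = ((⌊t / ‖x (φ k)‖⌋ : ℝ) * ‖x (φ k)‖) • u (φ k) := by
        intro k
        rw [mul_smul, hu]
        rw [← Int.cast_smul_eq_zsmul ℝ]
        congr 1
        rw [smul_inv_smul₀ (hn0 (φ k))]
      simp only [heq]
      refine Tendsto.smul ?_ hφtend
      have hbound : ∀ k, |(⌊t / ‖x (φ k)‖⌋ : ℝ) * ‖x (φ k)‖ - t| ≤ ‖x (φ k)‖ := by
        intro k
        have hr : (0:ℝ) < ‖x (φ k)‖ := lt_of_le_of_ne (norm_nonneg _) (Ne.symm (hn0 (φ k)))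
        have h1 : (⌊t / ‖x (φ k)‖⌋ : ℝ) ≤ t / ‖x (φ k)‖ := Int.floor_le _
        have h2 : t / ‖x (φ k)‖ - 1 < ⌊t / ‖x (φ k)‖⌋ := Int.sub_one_lt_floor _
        rw [abs_le]
        constructor
        · have h2' := mul_le_mul_of_nonneg_right h2.le hr.le
          rw [sub_mul, div_mul_cancel₀ _ (hn0 (φ k))] at h2'
          linarith
        · have h1' := mul_le_mul_of_nonneg_right h1 hr.le
          rw [div_mul_cancel₀ _ (hn0 (φ k))] at h1'
          linarith
      rw [← tendsto_sub_nhds_zero_iff]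
      refine squeeze_zero_norm ?_ hrtend
      simpa [Real.norm_eq_abs] using hbound
    exact hH.mem_of_tendsto key (Eventually.of_forall fun k => H.zsmul_mem (hxH _) _)

theorem separating (H : AddSubgroup E) (hH : IsClosed (H : Set E)) {ψ : E} (hψ : ψ ∉ H) :
    ∃ f : E →ₗ[ℝ] ℝ, (∀ x ∈ H, ∃ m : ℤ, f x = m) ∧ ¬ (∃ m : ℤ, f ψ = m) := by
  classical
  set V := lineSub H with hV
  obtain ⟨W, hVW⟩ := Submodule.exists_isCompl V
  set L : Submodule ℤ E := AddSubgroup.toIntSubmodule (H ⊓ W.toAddSubgroup) with hL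
  have hLmem : ∀ x : E, x ∈ L ↔ x ∈ H ∧ x ∈ W := fun x => Iff.rfl
  -- discreteness of L
  obtain ⟨ε, hε0, hεd⟩ : ∃ ε : ℝ, 0 < ε ∧ ∀ x ∈ L, ‖x‖ < ε → x = 0 := by
    by_contra hcon
    push_neg at hcon
    obtain ⟨z, hz1, hzW, hzH⟩ := exists_line H hH W (fun ε hε => by
      obtain ⟨x, hxL, hxn, hx0⟩ := hcon ε hε
      exact ⟨x, ((hLmem x).mp hxL).1, ((hLmem x).mp hxL).2, hx0, hxn⟩)
    have hzV : z ∈ V := hzH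
    have : z = 0 := disjoint_def.mp hVW.disjoint z hzV hzW
    rw [this] at hz1; simp at hz1
  -- the span of L and the lattice inside it
  set U : Submodule ℝ E := span ℝ (L : Set E) with hU
  have hLU : (L : Set E) ⊆ U := subset_span
  have hUW : U ≤ W := span_le.mpr (fun x hx => ((hLmem x).mp hx).2)
  set Lu : Submodule ℤ U := ZLattice.comap ℝ L U.subtype with hLu
  have hLuMem : ∀ x : U, x ∈ Lu ↔ (x : E) ∈ L := fun x => Iff.rfl
  have hdisc : DiscreteTopology Lu := by
    rw [discreteTopology_iff_isOpen_singleton_zero]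
    refine ⟨(↑) ⁻¹' Metric.ball (0:U) ε, (Metric.isOpen_ball).preimage continuous_subtype_val, ?_⟩
    ext x
    simp only [Set.mem_preimage, Metric.mem_ball, dist_zero_right, Set.mem_singleton_iff]
    constructor
    · intro hx
      have : ((x : U) : E) = 0 := hεd _ ((hLuMem x).mp x.2) hx
      exact Subtype.ext (Subtype.ext this)
    · rintro rfl; simpa using hε0
  have hzl : IsZLattice ℝ Lu := by
    constructor
    rw [hLu, ZLattice.coe_comap,
      Submodule.span_preimage_eq ⟨0, L.zero_mem⟩ (by rw [range_subtype]; exact hLU), ← hU,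
      comap_subtype_self]
  have : Module.Free ℤ Lu := ZLattice.module_free ℝ Lu
  have : Module.Finite ℤ Lu := ZLattice.module_finite ℝ Lu
  set b := Module.Free.chooseBasis ℤ Lu with hb
  set B := b.ofZLatticeBasis ℝ Lu with hB
  -- decompose ψ
  set v : E := (V.projectionOnto W hVW ψ : E) with hv
  set w : E := (W.projectionOnto V hVW.symm ψ : E) with hw
  have hvV : v ∈ V := (V.projectionOnto W hVW ψ).2
  have hwW : w ∈ W := (W.projectionOnto V hVW.symm ψ).2
  have hvw : v + w = ψ := Submodule.projection_add_projection_eq_self hVW ψ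
  have hvH : v ∈ H := lineSub_le H hvV
  have hwL : w ∉ L := by
    intro hmem
    exact hψ (hvw ▸ H.add_mem hvH ((hLmem w).mp hmem).1)
  -- every element of H decomposes as V + L
  have hHdec : ∀ x ∈ H, ∃ lw : E, lw ∈ L ∧ x - lw ∈ V := by
    intro x hx
    refine ⟨(W.projectionOnto V hVW.symm x : E), ?_, ?_⟩
    · refine (hLmem _).mpr ⟨?_, (W.projectionOnto V hVW.symm x).2⟩
      have hdx : (V.projectionOnto W hVW x : E) + (W.projectionOnto V hVW.symm x : E) = x :=
        Submodule.projection_add_projection_eq_self hVW x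
      rw [eq_sub_of_add_eq' hdx]
      exact H.sub_mem hx (lineSub_le H (V.projectionOnto W hVW x).2)
    · have hdx : (V.projectionOnto W hVW x : E) + (W.projectionOnto V hVW.symm x : E) = x :=
        Submodule.projection_add_projection_eq_self hVW x
      rw [(eq_sub_of_add_eq hdx).symm]
      exact (V.projectionOnto W hVW x).2
  by_cases hwU : w ∈ U
  · -- case B : w in span of lattice, some coordinate non-integral
    set wu : U := ⟨w, hwU⟩ with hwu
    obtain ⟨i, hi⟩ : ∃ i, ∀ m : ℤ, B.repr wu i ≠ m := by
      by_contra hcon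
      push_neg at hcon
      apply hwL
      have : wu ∈ span ℤ (Set.range B) := by
        rw [B.mem_span_iff_repr_mem ℤ]
        intro i
        obtain ⟨m, hm⟩ := hcon i
        exact ⟨m, hm.symm⟩
      rw [hB, b.ofZLatticeBasis_span ℝ] at this
      exact (hLuMem wu).mp this
    -- complement of U containing V
    obtain ⟨C, hC⟩ := Submodule.exists_isCompl (V ⊔ U)
    have hUVC : IsCompl U (V ⊔ C) := by
      constructor
      · rw [disjoint_def]
        intro x hxU hxVC
        obtain ⟨a, haV, c, hcC, rfl⟩ := mem_sup.mp hxVC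
        have hcUV : c ∈ V ⊔ U := by
          have : c = (a + c) - a := by abel
          rw [this]
          exact Submodule.sub_mem _ (le_sup_right (a := V) hxU) (le_sup_left (b := U) haV)
        have hc0 : c = 0 := disjoint_def.mp hC.disjoint c hcUV hcC
        rw [hc0, add_zero] at hxU ⊢
        exact disjoint_def.mp hVW.disjoint a haV (hUW hxU)
      · rw [codisjoint_iff]
        rw [← sup_assoc, sup_comm U V]
        exact codisjoint_iff.mp hC.codisjoint
    set π := U.projectionOnto (V ⊔ C) hUVC with hπ
    refine ⟨(B.coord i) ∘ₗ (π : E →ₗ[ℝ] U), ?_, ?_⟩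
    · intro x hx
      obtain ⟨lw, hlwL, hxlwV⟩ := hHdec x hx
      have hlwU : lw ∈ U := hLU hlwL
      have hπx : π x = ⟨lw, hlwU⟩ := by
        have : x = (⟨lw, hlwU⟩ : U) + (x - lw) := by simp
        rw [this, map_add]
        rw [Submodule.projectionOnto_apply_left hUVC ⟨lw, hlwU⟩,
          Submodule.projectionOnto_apply_of_mem_right hUVC (le_sup_left (b := C) hxlwV), add_zero]
      refine ⟨b.repr ⟨⟨lw, hlwU⟩, (hLuMem _).mpr hlwL⟩ i, ?_⟩
      simp only [LinearMap.coe_comp, Function.comp_apply, hπx]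
      rw [Basis.coord_apply, ← b.ofZLatticeBasis_repr_apply ℝ]
    · intro ⟨m, hm⟩
      apply hi m
      have hπψ : π ψ = wu := by
        rw [← hvw, map_add]
        rw [Submodule.projectionOnto_apply_of_mem_right hUVC (le_sup_left (b := C) hvV)]
        have : w = ((wu : U) : E) := rfl
        rw [this, Submodule.projectionOnto_apply_left hUVC wu, zero_add]
      rw [← hm]
      simp only [LinearMap.coe_comp, Function.comp_apply, hπψ, Basis.coord_apply]
  · -- case A : w outside the span; kill V ⊔ U, send ψ to 1/2
    have hψVU : ψ ∉ V ⊔ U := by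
      intro hmem
      apply hwU
      have hwVU : w ∈ V ⊔ U := by
        have : w = ψ - v := by rw [← hvw]; abel
        rw [this]
        exact Submodule.sub_mem _ hmem (le_sup_left (b := U) hvV)
      obtain ⟨a, haV, u0, hu0U, hsum⟩ := mem_sup.mp hwVU
      have : a = w - u0 := by rw [← hsum]; abel
      have haW : a ∈ W := by rw [this]; exact W.sub_mem hwW (hUW hu0U)
      have ha0 : a = 0 := disjoint_def.mp hVW.disjoint a haV haW
      rw [ha0, zero_add] at hsum
      rw [← hsum]; exact hu0U
    obtain ⟨f₀, hf₀ψ, hf₀⟩ := Submodule.exists_dual_map_eq_bot_of_notMem hψVU inferInstance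
    set f : E →ₗ[ℝ] ℝ := (1 / (2 * f₀ ψ)) • f₀ with hf
    have hfVU : ∀ x ∈ V ⊔ U, f x = 0 := by
      intro x hx
      have : f₀ x = 0 := by
        have : f₀ x ∈ Submodule.map f₀ (V ⊔ U) := Submodule.mem_map_of_mem hx
        rwa [hf₀, Submodule.mem_bot] at this
      simp [hf, this]
    have hfψ : f ψ = 1/2 := by
      simp only [hf, LinearMap.smul_apply, smul_eq_mul]
      field_simp
    refine ⟨f, ?_, ?_⟩
    · intro x hx
      obtain ⟨lw, hlwL, hxlwV⟩ := hHdec x hx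
      refine ⟨0, ?_⟩
      have : x = lw + (x - lw) := by abel
      rw [this, map_add, hfVU lw (le_sup_right (a := V) (hLU hlwL)),
        hfVU _ (le_sup_left (b := U) hxlwV)]
      simp
    · rintro ⟨m, hm⟩
      rw [hfψ] at hm
      have : (2 * m : ℤ) = (1 : ℤ) := by
        have : (2:ℝ) * m = 1 := by rw [← hm]; ring
        exact_mod_cast this
      omega

end KroneckerAux

lemma abs_sub_le_of_floor_div_eq {ε X Y : ℝ} (hε : 0 < ε) (h : ⌊X/ε⌋ = ⌊Y/ε⌋) : |X - Y| ≤ ε := by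
  have h1 : Int.fract (X/ε) - Int.fract (Y/ε) = X/ε - Y/ε := by
    rw [Int.fract, Int.fract, h]; ring
  have h2 : |X/ε - Y/ε| < 1 := by
    rw [← h1, abs_sub_lt_iff]
    constructor <;>
      nlinarith [Int.fract_nonneg (X/ε), Int.fract_lt_one (X/ε),
        Int.fract_nonneg (Y/ε), Int.fract_lt_one (Y/ε)]
  have h3 : X - Y = (X/ε - Y/ε) * ε := by field_simp
  rw [h3, abs_mul, abs_of_pos hε]
  nlinarith

lemma pigeon (s : ℕ) (θ : Fin s → ℝ) (M : ℕ) {ε : ℝ} (hε : 0 < ε) :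
    ∃ N : ℕ, M ≤ N ∧ ∃ q : Fin s → ℤ, ∀ i, |(N : ℝ) * θ i - q i| ≤ ε := by
  classical
  set M' := M + 1 with hM'
  set C : ℤ := ⌈1/ε⌉ + 1 with hC
  set F : ℕ → (Fin s → ℤ) := fun n i => ⌊Int.fract ((↑(n * M') : ℝ) * θ i) / ε⌋ with hF
  set T : Finset (Fin s → ℤ) := Fintype.piFinset (fun _ : Fin s => Finset.Ico (0:ℤ) C) with hT
  have hmaps : ∀ n : ℕ, n ∈ Finset.range (T.card + 1) → F n ∈ T := by
    intro n _
    rw [hT, Fintype.mem_piFinset]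
    intro i
    rw [Finset.mem_Ico]
    have hfr0 := Int.fract_nonneg ((↑(n * M') : ℝ) * θ i)
    have hfr1 := Int.fract_lt_one ((↑(n * M') : ℝ) * θ i)
    refine ⟨Int.floor_nonneg.mpr (by positivity), ?_⟩
    rw [Int.floor_lt]
    have hceil : 1/ε ≤ (⌈1/ε⌉ : ℝ) := Int.le_ceil _
    have h1e : (1/ε) * ε = 1 := by field_simp
    rw [div_lt_iff₀ hε, hC]
    push_cast at hfr0 hfr1 ⊢
    nlinarith [mul_le_mul_of_nonneg_right hceil hε.le]
  obtain ⟨a, _, b, _, hab, hFab⟩ :=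
    Finset.exists_ne_map_eq_of_card_lt_of_maps_to (by simp) hmaps
  have hkey : ∃ j k : ℕ, j < k ∧ F j = F k := by
    rcases lt_or_gt_of_ne hab with hlt | hgt
    · exact ⟨a, b, hlt, hFab⟩
    · exact ⟨b, a, hgt, hFab.symm⟩
  obtain ⟨j, k, hjk, hFeq⟩ := hkey
  refine ⟨(k - j) * M', ?_, fun i => ⌊(↑(k * M') : ℝ) * θ i⌋ - ⌊(↑(j * M') : ℝ) * θ i⌋, ?_⟩
  · calc M ≤ M' := Nat.le_succ M
      _ ≤ (k - j) * M' := Nat.le_mul_of_pos_left M' (by omega)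
  · intro i
    have hnum : (↑((k - j) * M') : ℝ) * θ i - (↑(⌊(↑(k * M') : ℝ) * θ i⌋ - ⌊(↑(j * M') : ℝ) * θ i⌋) : ℝ)
        = Int.fract ((↑(k * M') : ℝ) * θ i) - Int.fract ((↑(j * M') : ℝ) * θ i) := by
      rw [Int.fract, Int.fract]
      push_cast [Nat.cast_sub hjk.le]
      ring
    rw [hnum]
    exact abs_sub_le_of_floor_div_eq hε (congrFun hFeq i).symm

theorem kronecker_inhomogeneous (s : ℕ) (θ ψ : Fin s → ℝ)
    (h : ∀ u : Fin s → ℤ, (∃ m : ℤ, (∑ i, (u i : ℝ) * θ i) = m) →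
          ∃ m : ℤ, (∑ i, (u i : ℝ) * ψ i) = m) :
    ∀ ε : ℝ, 0 < ε → ∃ (p : Fin s → ℤ) (n : ℕ),
      ∀ i, |(n : ℝ) * θ i - p i - ψ i| ≤ ε := by
  classical
  intro ε hε
  set G₀ : AddSubgroup (Fin s → ℝ) :=
    { carrier := {x | ∃ (n : ℤ) (p : Fin s → ℤ), ∀ i, x i = n * θ i - p i}
      add_mem' := by
        rintro x y ⟨n₁, p₁, h₁⟩ ⟨n₂, p₂, h₂⟩
        refine ⟨n₁ + n₂, p₁ + p₂, fun i => ?_⟩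
        have := h₁ i; have := h₂ i
        simp only [Pi.add_apply]
        push_cast
        linarith
      zero_mem' := ⟨0, 0, fun i => by simp⟩
      neg_mem' := by
        rintro x ⟨n, p, hx⟩
        refine ⟨-n, -p, fun i => ?_⟩
        have := hx i
        simp only [Pi.neg_apply]
        push_cast
        linarith } with hG₀
  have hθG : θ ∈ G₀ := ⟨1, 0, fun i => by simp⟩
  have hsingle : ∀ j, (Pi.single j (1:ℝ) : Fin s → ℝ) ∈ G₀ := by
    intro j
    refine ⟨0, fun i => if i = j then (-1:ℤ) else 0, fun i => ?_⟩
    simp only [Pi.single_apply]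
    split <;> simp
  set H := G₀.topologicalClosure with hHdef
  have hψH : ψ ∈ H := by
    by_contra hψmem
    obtain ⟨f, hfH, hfψ⟩ := separating H (AddSubgroup.isClosed_topologicalClosure G₀) hψmem
    have hGH : G₀ ≤ H := AddSubgroup.le_topologicalClosure G₀
    set u : Fin s → ℤ := fun j => (hfH _ (hGH (hsingle j))).choose with hu
    have huspec : ∀ j, f (Pi.single j 1) = u j := fun j => (hfH _ (hGH (hsingle j))).choose_spec
    have hrep : ∀ y : Fin s → ℝ, f y = ∑ j, y j * (u j : ℝ) := by
      intro y
      conv_lhs => rw [← Finset.univ_sum_single y]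
      rw [map_sum]
      refine Finset.sum_congr rfl fun j _ => ?_
      have : Pi.single j (y j) = y j • (Pi.single j (1:ℝ) : Fin s → ℝ) := by
        rw [← Pi.single_smul, smul_eq_mul, mul_one]
      rw [this, map_smul, smul_eq_mul, huspec j]
    have h1 : ∃ m : ℤ, (∑ i, (u i : ℝ) * θ i) = m := by
      obtain ⟨m, hm⟩ := hfH θ (hGH hθG)
      refine ⟨m, ?_⟩
      rw [← hm, hrep θ]
      exact Finset.sum_congr rfl fun j _ => mul_comm _ _
    obtain ⟨m, hm⟩ := h u h1
    refine hfψ ⟨m, ?_⟩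
    rw [hrep ψ, ← hm]
    exact Finset.sum_congr rfl fun j _ => mul_comm _ _
  -- extract an approximation with integer n₀
  have hcl : ψ ∈ closure (G₀ : Set (Fin s → ℝ)) := hψH
  obtain ⟨y, hyG, hdist⟩ := Metric.mem_closure_iff.mp hcl (ε/2) (by positivity)
  obtain ⟨n₀, p₀, hy⟩ := hyG
  have happrox : ∀ i, |(n₀ : ℝ) * θ i - p₀ i - ψ i| ≤ ε/2 := by
    intro i
    have h1 : |ψ i - y i| ≤ dist ψ y := by
      rw [dist_eq_norm]
      simpa [Real.norm_eq_abs] using norm_le_pi_norm (ψ - y) i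
    rw [hy i] at h1
    have heq : (n₀ : ℝ) * θ i - p₀ i - ψ i = -(ψ i - ((n₀:ℝ) * θ i - (p₀ i : ℝ))) := by ring
    rw [heq, abs_neg]
    linarith
  obtain ⟨N, hMN, q, hq⟩ := pigeon s θ n₀.natAbs (half_pos hε)
  have hnn : (0:ℤ) ≤ n₀ + N := by
    have : (n₀.natAbs : ℤ) ≤ (N : ℤ) := by exact_mod_cast hMN
    omega
  refine ⟨p₀ + q, (n₀ + N).toNat, fun i => ?_⟩
  have hcast : (((n₀ + (N:ℤ)).toNat : ℕ) : ℝ) = (n₀ : ℝ) + (N : ℝ) := by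
    have h0 : ((n₀ + (N:ℤ)).toNat : ℤ) = n₀ + N := Int.toNat_of_nonneg hnn
    exact_mod_cast congrArg (Int.cast : ℤ → ℝ) h0
  rw [Pi.add_apply, hcast]
  have heq : ((n₀:ℝ) + N) * θ i - ((p₀ i : ℝ) + (q i : ℝ)) - ψ i
      = ((n₀:ℝ) * θ i - p₀ i - ψ i) + ((N:ℝ) * θ i - q i) := by ring
  have h1 := happrox i
  have h2 := hq i
  calc |((n₀:ℝ) + N) * θ i - ((p₀ i : ℤ) + (q i : ℤ) : ℤ) - ψ i|
      = |((n₀:ℝ) * θ i - p₀ i - ψ i) + ((N:ℝ) * θ i - q i)| := by push_cast; rw [heq]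
    _ ≤ |(n₀:ℝ) * θ i - p₀ i - ψ i| + |(N:ℝ) * θ i - q i| := abs_add_le _ _
    _ ≤ ε := by linarith
end
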